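/- Let ρ : ℝ → ℝ be a nonnegative integrable function with ∫_ℝ ρ(t) dt = 1 and κ := ∫_ℝ |t| ρ(t) dt < ∞, and for ε > 0 let p̂(t, ε) := ∫_ℝ max(t − εs, 0) ρ(s) ds. Then for every fixed ε > 0 the function t ↦ p̂(t, ε) is differentiable at every t ∈ ℝ, its derivative equals ∂_t p̂(t, ε) = ∫_{{s ∈ ℝ : εs ≤ t}} ρ(s) ds, and this derivative lies in the interval [0, 1]. -/

import Mathlib

open MeasureTheory

/-- For a probability density `ρ` with finite first absolute moment,
the smoothed plus function `p̂(·, ε)` (for fixed `ε > 0`) is differentiable at every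
`t`, with derivative `∫_{s : εs ≤ t} ρ(s) ds`, and this derivative lies in `[0, 1]`. -/
theorem smoothed_plus_differentiable
    (ρ : ℝ → ℝ) (hρ_int : Integrable ρ)
    (hρ_nonneg : ∀ t, 0 ≤ ρ t)
    (hρ_one : ∫ t, ρ t = 1)
    (κ : ℝ) (hκ_int : Integrable (fun t => |t| * ρ t))
    (hκ : κ = ∫ t, |t| * ρ t)
    (ε : ℝ) (hε : 0 < ε) (t : ℝ) :
    HasDerivAt (fun τ => ∫ s, max (τ - ε * s) 0 * ρ s)
        (∫ s in {s : ℝ | ε * s ≤ t}, ρ s) t ∧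
      (∫ s in {s : ℝ | ε * s ≤ t}, ρ s) ∈ Set.Icc (0 : ℝ) 1 := by
  have hmeas' : MeasurableSet {s : ℝ | ε * s < t} :=
    measurableSet_lt (by fun_prop) measurable_const
  have hsets : {s : ℝ | ε * s < t} =ᵐ[volume] {s : ℝ | ε * s ≤ t} := by
    rw [MeasureTheory.ae_eq_set]
    constructor
    · refine measure_mono_null (fun s hs => ?_) (measure_empty (μ := volume))
      simp only [Set.mem_diff, Set.mem_setOf_eq, not_le] at hs
      exact absurd hs.1.le (not_le.mpr hs.2)
    · refine measure_mono_null (fun s hs => ?_) (Real.volume_singleton (a := t / ε))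
      simp only [Set.mem_diff, Set.mem_setOf_eq, not_lt] at hs
      have h : ε * s = t := le_antisymm hs.1 hs.2
      simp only [Set.mem_singleton_iff, eq_div_iff hε.ne']
      linarith [h]
  set F' : ℝ → ℝ := {s : ℝ | ε * s < t}.indicator ρ with hF'
  have hmeasτ : ∀ τ : ℝ, AEStronglyMeasurable (fun s => max (τ - ε * s) 0 * ρ s) volume := by
    intro τ
    exact (((continuous_const.sub (continuous_const.mul continuous_id)).max
      continuous_const).aestronglyMeasurable).mul hρ_int.aestronglyMeasurable
  have hne : ∀ᵐ s : ℝ, s ≠ t / ε := by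
    have h0 : volume ({t / ε} : Set ℝ) = 0 := Real.volume_singleton
    rw [MeasureTheory.measure_eq_zero_iff_ae_notMem] at h0
    filter_upwards [h0] with s hs
    simpa using hs
  have hderiv : HasDerivAt (fun τ => ∫ s, max (τ - ε * s) 0 * ρ s) (∫ s, F' s) t := by
    refine (hasDerivAt_integral_of_dominated_loc_of_lip (s := Metric.ball t 1) (Metric.ball_mem_nhds t one_pos)
      (F := fun τ s => max (τ - ε * s) 0 * ρ s) (bound := ρ)
      (Filter.Eventually.of_forall hmeasτ) ?_
      (hρ_int.aestronglyMeasurable.indicator hmeas') ?_ hρ_int ?_).2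
    · refine ((hρ_int.const_mul |t|).add (hκ_int.const_mul ε)).mono' (hmeasτ t) ?_
      filter_upwards with s
      have h1 : max (t - ε * s) 0 ≤ |t| + ε * |s| := by
        rcases le_total (t - ε * s) 0 with h | h
        · simp [max_eq_right h]; positivity
        · rw [max_eq_left h]
          have := abs_mul ε s
          have := le_abs_self t
          have := neg_abs_le (ε * s)
          nlinarith [abs_nonneg s, le_abs_self t, neg_abs_le (ε * s), abs_mul ε s,
            abs_of_pos hε]
      have h2 : 0 ≤ max (t - ε * s) 0 := le_max_right _ _
      calc ‖max (t - ε * s) 0 * ρ s‖ = max (t - ε * s) 0 * ρ s := by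
            rw [Real.norm_eq_abs, abs_of_nonneg (mul_nonneg h2 (hρ_nonneg s))]
        _ ≤ (|t| + ε * |s|) * ρ s := mul_le_mul_of_nonneg_right h1 (hρ_nonneg s)
        _ = |t| * ρ s + ε * (|s| * ρ s) := by ring
    · filter_upwards with s
      rw [lipschitzOnWith_iff_dist_le_mul]
      intro a _ b _
      simp only [Real.dist_eq]
      have h1 : |max (a - ε * s) 0 - max (b - ε * s) 0| ≤ |(a - ε * s) - (b - ε * s)| :=
        abs_max_sub_max_le_abs _ _ _
      have h2 : |(a - ε * s) - (b - ε * s)| = |a - b| := by ring_nf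
      calc |max (a - ε * s) 0 * ρ s - max (b - ε * s) 0 * ρ s|
          = |max (a - ε * s) 0 - max (b - ε * s) 0| * |ρ s| := by
            rw [← sub_mul, abs_mul]
        _ ≤ |a - b| * |ρ s| :=
            mul_le_mul_of_nonneg_right (h1.trans_eq h2) (abs_nonneg _)
        _ = ↑(Real.nnabs (ρ s)) * |a - b| := by
            rw [Real.coe_nnabs, mul_comm]
    · filter_upwards [hne] with s hs
      rcases lt_or_gt_of_ne (fun h : ε * s = t => hs (by field_simp; linarith)) with h | h
      · show HasDerivAt _ ({s : ℝ | ε * s < t}.indicator ρ s) t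
        rw [Set.indicator_of_mem (show s ∈ {s' : ℝ | ε * s' < t} from h) ρ]
        have hd : HasDerivAt (fun τ => (τ - ε * s) * ρ s) (ρ s) t := by
          simpa using ((hasDerivAt_id t).sub_const (ε * s)).mul_const (ρ s)
        refine hd.congr_of_eventuallyEq ?_
        filter_upwards [Ioi_mem_nhds h] with τ hτ
        rw [max_eq_left (by exact sub_nonneg.mpr (le_of_lt hτ))]
      · show HasDerivAt _ ({s : ℝ | ε * s < t}.indicator ρ s) t
        rw [Set.indicator_of_notMem (show s ∉ {s' : ℝ | ε * s' < t} by
          simp only [Set.mem_setOf_eq, not_lt]; linarith) ρ]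
        refine (hasDerivAt_const t (0:ℝ)).congr_of_eventuallyEq ?_
        filter_upwards [Iio_mem_nhds h] with τ hτ
        rw [max_eq_right (by linarith [Set.mem_Iio.mp hτ]), zero_mul]
  have hint_eq : ∫ s, F' s = ∫ s in {s : ℝ | ε * s ≤ t}, ρ s := by
    rw [hF', integral_indicator hmeas']
    exact setIntegral_congr_set hsets
  constructor
  · rwa [hint_eq] at hderiv
  · constructor
    · exact setIntegral_nonneg (measurableSet_le (by fun_prop) measurable_const)
        fun s _ => hρ_nonneg s
    · calc (∫ s in {s : ℝ | ε * s ≤ t}, ρ s) ≤ ∫ s, ρ s :=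
          setIntegral_le_integral hρ_int (Filter.Eventually.of_forall hρ_nonneg)
        _ = 1 := hρ_one
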